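/- Let s ≥ 1, let a : Fin s → ℝ with a i > 0 for all i, and let l be a real number with 0 ≤ l and 2l ≤ a i for all i. Then every extreme point v of the chainlink polytope CL(ā,l) satisfies v_i ∈ {0, l, a_i − l, a_i} for every i ∈ Fin s. -/

import Mathlib

/-- The chainlink polytope `CL(ā,l) ⊆ ℝ^s` (indices taken cyclically). -/
def chainlink (s : ℕ) [NeZero s] (a : Fin s → ℝ) (l : ℝ) : Set (Fin s → ℝ) :=
  {x | (∀ i, 0 ≤ x i ∧ x i ≤ a i) ∧ ∀ i, x i - x (i + 1) ≤ a i - l}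

/-- every extreme point `v` of the chainlink polytope has
`vᵢ ∈ {0, l, aᵢ − l, aᵢ}` for each `i`, provided `2l ≤ aᵢ` for all `i`. -/
theorem chainlink_extremePoints_coords
    (s : ℕ) [NeZero s] (a : Fin s → ℝ) (ha : ∀ i, 0 < a i)
    (l : ℝ) (hl : 0 ≤ l) (h2l : ∀ i, 2 * l ≤ a i)
    (v : Fin s → ℝ) (hv : v ∈ Set.extremePoints ℝ (chainlink s a l)) :
    ∀ i, v i ∈ ({0, l, a i - l, a i} : Set ℝ) := by
  classical
  obtain ⟨hvmem, hvext⟩ := hv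
  obtain ⟨hbox, hchain⟩ := hvmem
  intro i
  by_contra hPi
  -- tightness of the cyclic constraints
  set T : Fin s → Prop := fun j => v j - v (j + 1) = a j - l with hTdef
  set B : Fin s → Fin s → Prop := fun p q => q = p + 1 ∧ T p with hBdef
  set R : Fin s → Fin s → Prop := fun p q => Relation.EqvGen B p q with hRdef
  -- membership in the four-element set propagates along tight constraints
  have step : ∀ p : Fin s, T p →
      (v p ∈ ({0, l, a p - l, a p} : Set ℝ) ↔
        v (p + 1) ∈ ({0, l, a (p+1) - l, a (p+1)} : Set ℝ)) := by
    intro p hTp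
    have hTp' : v p - v (p + 1) = a p - l := hTp
    have hq1 := (hbox (p + 1)).1
    have hq2 := (hbox (p + 1)).2
    have hp1 := (hbox p).1
    have hp2 := (hbox p).2
    have h2p := h2l p
    have h2q := h2l (p + 1)
    have hap := ha p
    simp only [Set.mem_insert_iff, Set.mem_singleton_iff]
    constructor
    · rintro (h | h | h | h)
      · exfalso; linarith
      · left; linarith
      · left; linarith
      · right; left; linarith
    · rintro (h | h | h | h)
      · right; right; left; linarith
      · right; right; right; linarith
      · right; right; right; linarith
      · right; right; right; linarith
  have key : ∀ p q, R p q →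
      (v p ∈ ({0, l, a p - l, a p} : Set ℝ) ↔
        v q ∈ ({0, l, a q - l, a q} : Set ℝ)) := by
    intro p q h
    induction h with
    | rel p q hpq =>
        obtain ⟨hq, hTp⟩ := hpq
        subst hq
        exact step p hTp
    | refl p => exact Iff.rfl
    | symm p q _ ih => exact ih.symm
    | trans p q r _ _ ih1 ih2 => exact ih1.trans ih2
  have hnotS : ∀ j, R i j → v j ∉ ({0, l, a j - l, a j} : Set ℝ) :=
    fun j hj hSj => hPi ((key i j hj).mpr hSj)
  have hpos : ∀ j, R i j → 0 < v j := by
    intro j hj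
    rcases lt_or_eq_of_le (hbox j).1 with h | h
    · exact h
    · exact absurd (Set.mem_insert_iff.mpr (Or.inl h.symm)) (hnotS j hj)
  have hlt : ∀ j, R i j → v j < a j := by
    intro j hj
    rcases lt_or_eq_of_le (hbox j).2 with h | h
    · exact h
    · refine absurd ?_ (hnotS j hj)
      simp only [Set.mem_insert_iff, Set.mem_singleton_iff]
      exact Or.inr (Or.inr (Or.inr h))
  have hRfwd : ∀ j, R i j → T j → R i (j + 1) :=
    fun j hj hT => Relation.EqvGen.trans _ _ _ hj (Relation.EqvGen.rel _ _ ⟨rfl, hT⟩)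
  have hRbwd : ∀ j, R i (j + 1) → T j → R i j :=
    fun j hj hT =>
      Relation.EqvGen.trans _ _ _ hj (Relation.EqvGen.symm _ _ (Relation.EqvGen.rel _ _ ⟨rfl, hT⟩))
  have hslack : ∀ j, ¬(R i j ↔ R i (j + 1)) → v j - v (j + 1) < a j - l := by
    intro j hne
    rcases lt_or_eq_of_le (hchain j) with h | h
    · exact h
    · exact absurd (Iff.intro (fun hj => hRfwd j hj h) (fun hj => hRbwd j hj h)) hne
  -- the perturbation size
  have hneF : (Finset.univ : Finset (Fin s)).Nonempty := ⟨0, Finset.mem_univ _⟩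
  set f : Fin s → ℝ := fun j =>
    min (if R i j then min (v j) (a j - v j) else 1)
        (if (R i j ↔ R i (j + 1)) then 1 else (a j - l) - (v j - v (j + 1))) with hf
  set ε : ℝ := Finset.univ.inf' hneF f with hε
  have hfpos : ∀ j, 0 < f j := by
    intro j
    apply lt_min
    · split_ifs with h
      · exact lt_min (hpos j h) (by linarith [hlt j h])
      · norm_num
    · split_ifs with h
      · norm_num
      · linarith [hslack j h]
  have hεpos : 0 < ε := by
    rw [hε]
    exact (Finset.lt_inf'_iff hneF).mpr fun j _ => hfpos j
  have hεle : ∀ j, ε ≤ f j := fun j => Finset.inf'_le f (Finset.mem_univ j)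
  have hεlow : ∀ j, R i j → ε ≤ v j := by
    intro j hj
    have h := hεle j
    simp only [hf, if_pos hj] at h
    exact h.trans ((min_le_left _ _).trans (min_le_left _ _))
  have hεhigh : ∀ j, R i j → ε ≤ a j - v j := by
    intro j hj
    have h := hεle j
    simp only [hf, if_pos hj] at h
    exact h.trans ((min_le_left _ _).trans (min_le_right _ _))
  have hεslack : ∀ j, ¬(R i j ↔ R i (j + 1)) → ε ≤ (a j - l) - (v j - v (j + 1)) := by
    intro j hj
    have h := hεle j
    simp only [hf, if_neg hj] at h
    exact h.trans (min_le_right _ _)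
  -- the perturbation direction
  set w : Fin s → ℝ := fun j => if R i j then 1 else 0 with hw
  set x : Fin s → ℝ := fun j => v j + ε * w j with hx
  set y : Fin s → ℝ := fun j => v j - ε * w j with hy
  have hxmem : x ∈ chainlink s a l := by
    constructor
    · intro j
      simp only [hx, hw]
      split_ifs with h
      · exact ⟨by linarith [(hbox j).1, hεpos], by linarith [hεhigh j h]⟩
      · exact ⟨by linarith [(hbox j).1], by linarith [(hbox j).2]⟩
    · intro j
      simp only [hx, hw]
      split_ifs with h1 h2 h2
      · linarith [hchain j]
      · have := hεslack j (by simp [h1, h2])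
        linarith
      · linarith [hchain j, hεpos]
      · linarith [hchain j]
  have hymem : y ∈ chainlink s a l := by
    constructor
    · intro j
      simp only [hy, hw]
      split_ifs with h
      · exact ⟨by linarith [hεlow j h], by linarith [(hbox j).2, hεpos]⟩
      · exact ⟨by linarith [(hbox j).1], by linarith [(hbox j).2]⟩
    · intro j
      simp only [hy, hw]
      split_ifs with h1 h2 h2
      · linarith [hchain j]
      · linarith [hchain j, hεpos]
      · have := hεslack j (by simp [h1, h2])
        linarith
      · linarith [hchain j]
  have hseg : v ∈ openSegment ℝ x y := by
    refine ⟨1 / 2, 1 / 2, by norm_num, by norm_num, by norm_num, ?_⟩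
    funext j
    simp only [hx, hy, Pi.add_apply, Pi.smul_apply, smul_eq_mul]
    ring
  have hx_eq := hvext hxmem hymem hseg
  have hxi : x i = v i := by rw [hx_eq]
  have hRii : R i i := Relation.EqvGen.refl i
  simp only [hx, hw, if_pos hRii] at hxi
  linarith
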